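/- Let V be a smooth q-vector field on an open set U ⊆ ℝⁿ (1 ≤ q ≤ n) having conformal constant coefficients on a neighbourhood of a point x ∈ U, and let ω_n be a smooth nowhere-vanishing n-form on U. Then the (n−q)-form i_Vω_n has conformal constant coefficients on a neighbourhood of x. -/

import Mathlib

open ContinuousLinearMap in
private theorem ml_expand {d k : ℕ} {N : Type*} [AddCommGroup N] [Module ℝ N]
    (m : MultilinearMap ℝ (fun _ : Fin k => (Fin d → ℝ)) N) (w : Fin k → (Fin d → ℝ)) :
    m w = ∑ t : Fin k → Fin d, (∏ i, w i (t i)) • m (fun i => Pi.single (t i) 1) := by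
  classical
  have hw : w = fun i => ∑ j : Fin d, w i j • (Pi.single j 1 : Fin d → ℝ) := by
    funext i x
    simp [Finset.sum_apply, Pi.single_apply]
  calc m w = m (fun i => ∑ j : Fin d, w i j • (Pi.single j 1 : Fin d → ℝ)) := by rw [← hw]
    _ = ∑ t : Fin k → Fin d, m (fun i => w i (t i) • (Pi.single (t i) 1 : Fin d → ℝ)) :=
        m.map_sum (fun i j => w i j • (Pi.single j 1 : Fin d → ℝ))
    _ = _ := Finset.sum_congr rfl fun t _ => m.map_smul_univ _ _

private noncomputable def mlCurry {d q r : ℕ} (M : MultilinearMap ℝ (fun _ : Fin (q + r) => (Fin d → ℝ)) ℝ) :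
    MultilinearMap ℝ (fun _ : Fin q => (Fin d → ℝ))
      (MultilinearMap ℝ (fun _ : Fin r => (Fin d → ℝ)) ℝ) :=
  (M.domDomCongr finSumFinEquiv.symm).currySum

private theorem mlCurry_apply {d q r : ℕ}
    (M : MultilinearMap ℝ (fun _ : Fin (q + r) => (Fin d → ℝ)) ℝ)
    (a : Fin q → (Fin d → ℝ)) (w : Fin r → (Fin d → ℝ)) :
    mlCurry M a w = M (Fin.append a w) := by
  simp only [mlCurry, MultilinearMap.currySum_apply, MultilinearMap.domDomCongr_apply]
  congr 1
  funext j
  refine Fin.addCases (fun i => ?_) (fun i => ?_) j <;> simp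

private theorem comp_append {d q r : ℕ} (A : (Fin d → ℝ) → (Fin d → ℝ))
    (a : Fin q → (Fin d → ℝ)) (w : Fin r → (Fin d → ℝ)) :
    (fun j => A (Fin.append a w j)) = Fin.append (fun i => A (a i)) (fun i => A (w i)) := by
  funext j
  refine Fin.addCases (fun i => ?_) (fun i => ?_) j <;> simp

private theorem ml_append_expand {d q r : ℕ}
    (M : MultilinearMap ℝ (fun _ : Fin (q + r) => (Fin d → ℝ)) ℝ)
    (a : Fin q → (Fin d → ℝ)) (w : Fin r → (Fin d → ℝ)) :
    M (Fin.append a w) = ∑ t : Fin q → Fin d,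
      (∏ i, a i (t i)) * M (Fin.append (fun i => Pi.single (t i) 1) w) := by
  rw [← mlCurry_apply, ml_expand (mlCurry M) a, MultilinearMap.sum_apply]
  refine Finset.sum_congr rfl fun t _ => ?_
  rw [MultilinearMap.smul_apply, mlCurry_apply, smul_eq_mul]

private theorem ml_append_expand_right {d q r : ℕ}
    (M : MultilinearMap ℝ (fun _ : Fin (q + r) => (Fin d → ℝ)) ℝ)
    (a : Fin q → (Fin d → ℝ)) (w : Fin r → (Fin d → ℝ)) :
    M (Fin.append a w) = ∑ t : Fin r → Fin d,
      (∏ i, w i (t i)) * M (Fin.append a (fun i => Pi.single (t i) 1)) := by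
  rw [← mlCurry_apply, ml_expand (mlCurry M a) w]
  simp only [smul_eq_mul]
  refine Finset.sum_congr rfl fun t _ => ?_
  rw [mlCurry_apply]

private theorem vec_expand {d : ℕ} (v : Fin d → ℝ) :
    v = ∑ j : Fin d, v j • (Pi.single j 1 : Fin d → ℝ) := by
  funext x
  simp [Finset.sum_apply, Pi.single_apply]

private theorem proj_comp_eq {d : ℕ} (B : (Fin d → ℝ) →L[ℝ] (Fin d → ℝ)) (j : Fin d) :
    (ContinuousLinearMap.proj j : (Fin d → ℝ) →L[ℝ] ℝ).comp B
      = ∑ k : Fin d, (B (Pi.single k 1) j) •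
          (ContinuousLinearMap.proj k : (Fin d → ℝ) →L[ℝ] ℝ) := by
  ext v
  conv_lhs => rw [ContinuousLinearMap.comp_apply, vec_expand v]
  simp [Finset.sum_apply, mul_comm]

private theorem c_expand {d q : ℕ} (c : ((Fin d → ℝ) →L[ℝ] ℝ) [×q]→L[ℝ] ℝ)
    (B : (Fin d → ℝ) →L[ℝ] (Fin d → ℝ)) (s : Fin q → Fin d) :
    c (fun i => (ContinuousLinearMap.proj (s i)).comp B)
      = ∑ t : Fin q → Fin d, (∏ i, B (Pi.single (t i) 1) (s i)) *
          c (fun i => ContinuousLinearMap.proj (t i)) := by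
  classical
  have h : (fun i => (ContinuousLinearMap.proj (s i) : (Fin d → ℝ) →L[ℝ] ℝ).comp B)
      = fun i => ∑ k : Fin d, (B (Pi.single k 1) (s i)) •
          (ContinuousLinearMap.proj k : (Fin d → ℝ) →L[ℝ] ℝ) := by
    funext i; exact proj_comp_eq B (s i)
  rw [h, c.map_sum]
  refine Finset.sum_congr rfl fun t _ => ?_
  rw [c.map_smul_univ, smul_eq_mul]

private theorem dual_key {d : ℕ} (A B : (Fin d → ℝ) →L[ℝ] (Fin d → ℝ))
    (hAB : ∀ v, A (B v) = v) (k m : Fin d) :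
    ∑ j : Fin d, B (Pi.single k 1) j * A (Pi.single j 1) m = if m = k then 1 else 0 := by
  classical
  have h1 : A (B (Pi.single k 1)) = ∑ j : Fin d, B (Pi.single k 1) j • A (Pi.single j 1) := by
    conv_lhs => rw [vec_expand (B (Pi.single k 1))]
    rw [map_sum]
    simp
  have h2 := congrFun (h1.symm.trans (congrArg _ rfl)).symm m
  have h3 : (A (B (Pi.single k 1))) m = (Pi.single k 1 : Fin d → ℝ) m := by rw [hAB]
  calc ∑ j : Fin d, B (Pi.single k 1) j * A (Pi.single j 1) m
      = (∑ j : Fin d, B (Pi.single k 1) j • A (Pi.single j 1)) m := by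
        simp [Finset.sum_apply]
    _ = (A (B (Pi.single k 1))) m := by rw [← h1]
    _ = (Pi.single k 1 : Fin d → ℝ) m := h3
    _ = if m = k then 1 else 0 := by rw [Pi.single_apply]

private theorem dual_pair_sum {d q r : ℕ}
    (c : ((Fin d → ℝ) →L[ℝ] ℝ) [×q]→L[ℝ] ℝ)
    (M : MultilinearMap ℝ (fun _ : Fin (q + r) => (Fin d → ℝ)) ℝ)
    (A B : (Fin d → ℝ) →L[ℝ] (Fin d → ℝ)) (hAB : ∀ v, A (B v) = v)
    (w : Fin r → (Fin d → ℝ)) :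
    ∑ s : Fin q → Fin d, c (fun i => (ContinuousLinearMap.proj (s i)).comp B) *
        M (Fin.append (fun i => A (Pi.single (s i.rev) 1)) w)
    = ∑ s : Fin q → Fin d, c (fun i => ContinuousLinearMap.proj (s i)) *
        M (Fin.append (fun i => Pi.single (s i.rev) 1) w) := by
  classical
  -- expand both factors on the left
  have step1 : ∀ s : Fin q → Fin d,
      c (fun i => (ContinuousLinearMap.proj (s i)).comp B) *
        M (Fin.append (fun i => A (Pi.single (s i.rev) 1)) w)
      = ∑ t : Fin q → Fin d, ∑ t' : Fin q → Fin d,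
          ((∏ i, B (Pi.single (t i) 1) (s i)) * (∏ i, A (Pi.single (s i.rev) 1) (t' i))) *
            (c (fun i => ContinuousLinearMap.proj (t i)) *
              M (Fin.append (fun i => Pi.single (t' i) 1) w)) := by
    intro s
    rw [c_expand c B s, ml_append_expand M _ w, Finset.sum_mul_sum]
    refine Finset.sum_congr rfl fun t _ => Finset.sum_congr rfl fun t' _ => by ring
  calc ∑ s : Fin q → Fin d, c (fun i => (ContinuousLinearMap.proj (s i)).comp B) *
        M (Fin.append (fun i => A (Pi.single (s i.rev) 1)) w)
      = ∑ t : Fin q → Fin d, ∑ t' : Fin q → Fin d, (∑ s : Fin q → Fin d,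
          (∏ i, B (Pi.single (t i) 1) (s i)) * (∏ i, A (Pi.single (s i.rev) 1) (t' i))) *
            (c (fun i => ContinuousLinearMap.proj (t i)) *
              M (Fin.append (fun i => Pi.single (t' i) 1) w)) := by
        simp only [step1]
        rw [Finset.sum_comm]
        refine Finset.sum_congr rfl fun t _ => ?_
        rw [Finset.sum_comm]
        refine Finset.sum_congr rfl fun t' _ => ?_
        rw [Finset.sum_mul]
    _ = ∑ t : Fin q → Fin d, ∑ t' : Fin q → Fin d,
          (if t' = (fun i => t i.rev) then (1:ℝ) else 0) *
            (c (fun i => ContinuousLinearMap.proj (t i)) *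
              M (Fin.append (fun i => Pi.single (t' i) 1) w)) := by
        refine Finset.sum_congr rfl fun t _ => Finset.sum_congr rfl fun t' _ => ?_
        congr 1
        -- ∑ s ∏ ... = δ
        have hrev : ∀ s : Fin q → Fin d, (∏ i, A (Pi.single (s i.rev) 1) (t' i))
            = ∏ i, A (Pi.single (s i) 1) (t' i.rev) := by
          intro s
          exact Fintype.prod_equiv (Fin.revPerm) _ _ (fun i => by simp)
        calc ∑ s : Fin q → Fin d,
              (∏ i, B (Pi.single (t i) 1) (s i)) * (∏ i, A (Pi.single (s i.rev) 1) (t' i))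
            = ∑ s : Fin q → Fin d,
              ∏ i, (B (Pi.single (t i) 1) (s i) * A (Pi.single (s i) 1) (t' i.rev)) := by
              refine Finset.sum_congr rfl fun s _ => ?_
              rw [hrev s, ← Finset.prod_mul_distrib]
          _ = ∏ i : Fin q, ∑ j : Fin d,
              (B (Pi.single (t i) 1) j * A (Pi.single j 1) (t' i.rev)) := by
              rw [← Finset.sum_prod_piFinset, Fintype.piFinset_univ]
          _ = ∏ i : Fin q, if t' i.rev = t i then (1:ℝ) else 0 := by
              exact Finset.prod_congr rfl fun i _ => dual_key A B hAB (t i) (t' i.rev)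
          _ = if t' = (fun i => t i.rev) then (1:ℝ) else 0 := by
              rw [Finset.prod_boole]
              congr 1
              simp only [eq_iff_iff]
              constructor
              · intro hall
                funext i
                have := hall i.rev (Finset.mem_univ _)
                simpa using this
              · intro heq i _
                rw [heq]
                simp
    _ = ∑ s : Fin q → Fin d, c (fun i => ContinuousLinearMap.proj (s i)) *
        M (Fin.append (fun i => Pi.single (s i.rev) 1) w) := by
        refine Finset.sum_congr rfl fun t _ => ?_
        simp only [ite_mul, zero_mul, one_mul]
        rw [Finset.sum_ite_eq' Finset.univ (fun i => t i.rev)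
          (fun t' => (c (fun i => ContinuousLinearMap.proj (t i)) *
              M (Fin.append (fun i => Pi.single (t' i) 1) w)))]
        simp

private theorem top_form_eq {d : ℕ}
    (ω : ContinuousMultilinearMap ℝ (fun _ : Fin d => (Fin d → ℝ)) ℝ)
    (halt : ∀ v : Fin d → (Fin d → ℝ), ∀ i j, i ≠ j → v i = v j → ω v = 0)
    (Aeq : (Fin d → ℝ) ≃ₗ[ℝ] (Fin d → ℝ)) (v : Fin d → (Fin d → ℝ)) :
    ω v = ω (fun k => Aeq.symm (Pi.single k 1)) *
      (Matrix.detRowAlternating :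
          (Fin d → ℝ) [⋀^Fin d]→ₗ[ℝ] ℝ).toMultilinearMap (fun i => Aeq (v i)) := by
  classical
  let ωa : (Fin d → ℝ) [⋀^Fin d]→ₗ[ℝ] ℝ :=
    { toMultilinearMap := ω.toMultilinearMap
      map_eq_zero_of_eq' := fun v i j hv hij => halt v i j hij hv }
  let b : Module.Basis (Fin d) ℝ (Fin d → ℝ) := (Pi.basisFun ℝ (Fin d)).map Aeq.symm
  have hb : ⇑b = fun k => Aeq.symm (Pi.single k 1) := by
    funext k
    simp [b, Module.Basis.map_apply]
  have h := ωa.eq_smul_basis_det b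
  have h2 : ω v = (ωa ⇑b) * b.det v := by
    conv_lhs => rw [show ω v = ωa v from rfl, h]
    simp
  rw [h2, hb]
  congr 1
  rw [Module.Basis.det_apply]
  have hM : b.toMatrix v = Matrix.of (fun i j => Aeq (v j) i) := by
    ext i j
    rw [Module.Basis.toMatrix_apply]
    simp [b, Module.Basis.map_repr]
  rw [hM]
  have : Matrix.detRowAlternating.toMultilinearMap (fun i => Aeq (v i))
      = Matrix.det (Matrix.of fun i j => Aeq (v i) j) := rfl
  rw [this, ← Matrix.det_transpose]
  congr 1

/-- Constant coefficients for a `p`-form on `ℝⁿ` (see context). -/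
def HasConstantCoefficientsFormAt (n p : ℕ) (U : Set (Fin n → ℝ))
    (ω : (Fin n → ℝ) → ((Fin n → ℝ) [×p]→L[ℝ] ℝ)) (x : Fin n → ℝ) : Prop :=
  ∃ V : Set (Fin n → ℝ), IsOpen V ∧ x ∈ V ∧ V ⊆ U ∧
    ∃ u : (Fin n → ℝ) → (Fin n → ℝ),
      ContDiffOn ℝ (⊤ : ℕ∞) u V ∧ Set.InjOn u V ∧ IsOpen (u '' V) ∧
      (∀ y ∈ V, Function.Bijective (fderiv ℝ u y)) ∧
      ∃ c : (Fin n → ℝ) [×p]→L[ℝ] ℝ,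
        ∀ y ∈ V, ∀ v : Fin p → (Fin n → ℝ),
          ω y v = c (fun i => fderiv ℝ u y (v i))

/-- Constant coefficients for a `q`-vector field on `ℝⁿ` (see context). -/
def HasConstantCoefficientsVecAt (n q : ℕ) (U : Set (Fin n → ℝ))
    (V : (Fin n → ℝ) → (((Fin n → ℝ) →L[ℝ] ℝ) [×q]→L[ℝ] ℝ)) (x : Fin n → ℝ) : Prop :=
  ∃ W : Set (Fin n → ℝ), IsOpen W ∧ x ∈ W ∧ W ⊆ U ∧
    ∃ u : (Fin n → ℝ) → (Fin n → ℝ),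
      ContDiffOn ℝ (⊤ : ℕ∞) u W ∧ Set.InjOn u W ∧ IsOpen (u '' W) ∧
      (∀ y ∈ W, Function.Bijective (fderiv ℝ u y)) ∧
      ∃ c : ((Fin n → ℝ) →L[ℝ] ℝ) [×q]→L[ℝ] ℝ,
        ∀ y ∈ W, ∀ w : Fin q → ((Fin n → ℝ) →L[ℝ] ℝ),
          c w = V y (fun i => (w i).comp (fderiv ℝ u y))

/-- Conformal constant coefficients for a `q`-vector field. -/
def HasConformalConstantCoefficientsVecAt (n q : ℕ) (U : Set (Fin n → ℝ))
    (V : (Fin n → ℝ) → (((Fin n → ℝ) →L[ℝ] ℝ) [×q]→L[ℝ] ℝ)) (x : Fin n → ℝ) : Prop :=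
  ∃ W : Set (Fin n → ℝ), IsOpen W ∧ x ∈ W ∧ W ⊆ U ∧
    ∃ f : (Fin n → ℝ) → ℝ, ContDiffOn ℝ (⊤ : ℕ∞) f W ∧
      ∃ V' : (Fin n → ℝ) → (((Fin n → ℝ) →L[ℝ] ℝ) [×q]→L[ℝ] ℝ),
        HasConstantCoefficientsVecAt n q Set.univ V' x ∧
        ∀ y ∈ W, V y = f y • V' y

/-- Remark 1.22: with `n = q + r` and `1 ≤ q ≤ n`, if a smooth
`q`-vector field `V` has conformal constant coefficients near `x ∈ U` and `ω_n` is a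
smooth nowhere-vanishing `n`-form on `U`, then the `(n−q)`-form `i_V ω_n` — given in
coordinates by `(i_V ω_n)_y(z) = (1/q!) Σ_s V_y(ε^{s(0)},…,ε^{s(q-1)})
ω_n(e_{s(q-1)},…,e_{s(0)}, z₁,…,z_r)` — has conformal constant coefficients near
`x`: it equals `f·ω′` near `x` with `f` smooth and `ω′` of constant coefficients. -/
theorem interiorProduct_conformalConstantCoefficients (q r : ℕ) (hq : 1 ≤ q)
    (U : Set (Fin (q + r) → ℝ)) (hU : IsOpen U)
    (V : (Fin (q + r) → ℝ) → (((Fin (q + r) → ℝ) →L[ℝ] ℝ) [×q]→L[ℝ] ℝ))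
    (hV : ContDiffOn ℝ (⊤ : ℕ∞) V U)
    (haltV : ∀ y ∈ U, ∀ w : Fin q → ((Fin (q + r) → ℝ) →L[ℝ] ℝ), ∀ i j, i ≠ j →
      w i = w j → V y w = 0)
    (ωn : (Fin (q + r) → ℝ) → ((Fin (q + r) → ℝ) [×(q + r)]→L[ℝ] ℝ))
    (hωn : ContDiffOn ℝ (⊤ : ℕ∞) ωn U)
    (haltω : ∀ y ∈ U, ∀ v : Fin (q + r) → (Fin (q + r) → ℝ), ∀ i j, i ≠ j →
      v i = v j → ωn y v = 0)
    (hωn0 : ∀ y ∈ U, ωn y ≠ 0)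
    (x : Fin (q + r) → ℝ) (hx : x ∈ U)
    (hcc : HasConformalConstantCoefficientsVecAt (q + r) q U V x)
    (ιVω : (Fin (q + r) → ℝ) → (Fin r → (Fin (q + r) → ℝ)) → ℝ)
    (hιVω : ∀ y : Fin (q + r) → ℝ, ∀ z : Fin r → (Fin (q + r) → ℝ),
      ιVω y z = (1 / (q.factorial : ℝ)) *
        ∑ s : Fin q → Fin (q + r),
          V y (fun i => ContinuousLinearMap.proj (s i)) *
            ωn y (Fin.append (fun i : Fin q => Pi.single (s i.rev) (1 : ℝ)) z)) :
    ∃ W : Set (Fin (q + r) → ℝ), IsOpen W ∧ x ∈ W ∧ W ⊆ U ∧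
      ∃ f : (Fin (q + r) → ℝ) → ℝ, ContDiffOn ℝ (⊤ : ℕ∞) f W ∧
        ∃ ω' : (Fin (q + r) → ℝ) → ((Fin (q + r) → ℝ) [×r]→L[ℝ] ℝ),
          HasConstantCoefficientsFormAt (q + r) r Set.univ ω' x ∧
          ∀ y ∈ W, ∀ z : Fin r → (Fin (q + r) → ℝ), ιVω y z = f y * ω' y z := by
  classical
  obtain ⟨W₁, hW₁o, hxW₁, hW₁U, g, hg, V', ⟨W₂, hW₂o, hxW₂, -, u, hu, huinj, huim, hubij, c, hc⟩,
    hVg⟩ := hcc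
  set D : MultilinearMap ℝ (fun _ : Fin (q + r) => (Fin (q + r) → ℝ)) ℝ :=
    (Matrix.detRowAlternating : (Fin (q + r) → ℝ) [⋀^Fin (q + r)]→ₗ[ℝ] ℝ).toMultilinearMap with hD
  set K : (Fin r → Fin (q + r)) → ℝ := fun t =>
    (q.factorial : ℝ)⁻¹ * ∑ s : Fin q → Fin (q + r),
      c (fun i => ContinuousLinearMap.proj (s i)) *
        D (Fin.append (fun i => Pi.single (s i.rev) 1) (fun i => Pi.single (t i) 1)) with hK
  set c' : (Fin (q + r) → ℝ) [×r]→L[ℝ] ℝ :=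
    ∑ t : Fin r → Fin (q + r), K t •
      (ContinuousMultilinearMap.mkPiAlgebra ℝ (Fin r) ℝ).compContinuousLinearMap
        (fun i => ContinuousLinearMap.proj (t i)) with hc'
  have hc'app : ∀ w : Fin r → (Fin (q + r) → ℝ),
      c' w = (q.factorial : ℝ)⁻¹ * ∑ s : Fin q → Fin (q + r),
        c (fun i => ContinuousLinearMap.proj (s i)) *
          D (Fin.append (fun i => Pi.single (s i.rev) 1) w) := by
    intro w
    have h1 : c' w = ∑ t : Fin r → Fin (q + r), K t * ∏ i, w i (t i) := by
      rw [hc', ContinuousMultilinearMap.sum_apply]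
      refine Finset.sum_congr rfl fun t _ => ?_
      simp [smul_eq_mul]
    rw [h1, Finset.mul_sum]
    calc ∑ t : Fin r → Fin (q + r), K t * ∏ i, w i (t i)
        = ∑ t : Fin r → Fin (q + r), ∑ s : Fin q → Fin (q + r),
            (q.factorial : ℝ)⁻¹ * ((c (fun i => ContinuousLinearMap.proj (s i)) *
              D (Fin.append (fun i => Pi.single (s i.rev) 1) (fun i => Pi.single (t i) 1))) *
                ∏ i, w i (t i)) := by
          refine Finset.sum_congr rfl fun t _ => ?_
          rw [hK, mul_assoc, Finset.sum_mul, Finset.mul_sum]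
      _ = ∑ s : Fin q → Fin (q + r), ∑ t : Fin r → Fin (q + r),
            (q.factorial : ℝ)⁻¹ * ((c (fun i => ContinuousLinearMap.proj (s i)) *
              D (Fin.append (fun i => Pi.single (s i.rev) 1) (fun i => Pi.single (t i) 1))) *
                ∏ i, w i (t i)) := Finset.sum_comm
      _ = _ := by
          refine Finset.sum_congr rfl fun s _ => ?_
          rw [ml_append_expand_right D (fun i => Pi.single (s i.rev) 1) w, Finset.mul_sum,
            Finset.mul_sum]
          exact Finset.sum_congr rfl fun t _ => by ring
  -- the smooth scale factor coming from ωn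
  set h : (Fin (q + r) → ℝ) → ℝ := fun y =>
    ωn y (fun k => ContinuousLinearMap.inverse (fderiv ℝ u y) (Pi.single k 1)) with hh
  refine ⟨W₁ ∩ W₂, hW₁o.inter hW₂o, ⟨hxW₁, hxW₂⟩, Set.inter_subset_left.trans hW₁U,
    fun y => g y * h y, ?_,
    fun y => c'.compContinuousLinearMap (fun _ => fderiv ℝ u y),
    ⟨W₂, hW₂o, hxW₂, Set.subset_univ _, u, hu, huinj, huim, hubij, c',
      fun y hy v => by simp⟩, ?_⟩
  · -- smoothness of f = g * h
    have hA' : ContDiffOn ℝ (⊤ : ℕ∞) (fun y => fderiv ℝ u y) W₂ :=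
      hu.fderiv_of_isOpen hW₂o (by simp)
    refine (hg.mono Set.inter_subset_left).mul ?_
    intro y hy
    have hbij := hubij y hy.2
    have hbij' : Function.Bijective
        ((fderiv ℝ u y : (Fin (q + r) → ℝ) →ₗ[ℝ] (Fin (q + r) → ℝ))) := hbij
    set Aeq := LinearEquiv.ofBijective _ hbij' with hAeq
    set Ace := Aeq.toContinuousLinearEquiv with hAce0
    have hAce : (Ace : (Fin (q + r) → ℝ) →L[ℝ] (Fin (q + r) → ℝ)) = fderiv ℝ u y := by
      ext v
      simp [hAce0, hAeq]
    have hinvAt : ContDiffAt ℝ (⊤ : ℕ∞) ContinuousLinearMap.inverse (fderiv ℝ u y) := by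
      rw [← hAce]
      exact contDiffAt_map_inverse Ace
    have hBy : ContDiffWithinAt ℝ (⊤ : ℕ∞)
        (fun y' => ContinuousLinearMap.inverse (fderiv ℝ u y')) (W₁ ∩ W₂) y :=
      hinvAt.comp_contDiffWithinAt y ((hA' y hy.2).mono Set.inter_subset_right)
    have hG : ContDiffWithinAt ℝ (⊤ : ℕ∞)
        (fun y' => (ContinuousMultilinearMap.compContinuousLinearMapContinuousMultilinear ℝ
          (fun _ : Fin (q + r) => (Fin (q + r) → ℝ)) (fun _ : Fin (q + r) => (Fin (q + r) → ℝ)) ℝ)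
            (fun _ : Fin (q + r) => ContinuousLinearMap.inverse (fderiv ℝ u y')))
          (W₁ ∩ W₂) y :=
      (ContinuousMultilinearMap.contDiff _).contDiffAt.comp_contDiffWithinAt y
        (contDiffWithinAt_pi.2 fun _ => hBy)
    have hωn' : ContDiffWithinAt ℝ (⊤ : ℕ∞) ωn (W₁ ∩ W₂) y :=
      (hωn.mono (Set.inter_subset_left.trans hW₁U)) y hy
    have hG2 := hG.clm_apply hωn'
    have hfinal := (contDiffWithinAt_const (c := ContinuousMultilinearMap.apply ℝ
        (fun _ : Fin (q + r) => (Fin (q + r) → ℝ)) ℝ (fun k => Pi.single k 1))).clm_apply hG2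
    refine hfinal.congr (fun y' _ => ?_) ?_
    · rw [hh]
      simp [ContinuousMultilinearMap.compContinuousLinearMapContinuousMultilinear,
        ContinuousMultilinearMap.compContinuousLinearMapMultilinear,
        MultilinearMap.coe_mkContinuous,
        ContinuousMultilinearMap.compContinuousLinearMapL_apply]
    · rw [hh]
      simp [ContinuousMultilinearMap.compContinuousLinearMapContinuousMultilinear,
        ContinuousMultilinearMap.compContinuousLinearMapMultilinear,
        MultilinearMap.coe_mkContinuous,
        ContinuousMultilinearMap.compContinuousLinearMapL_apply]
  · -- the pointwise identity
    intro y hy z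
    have hyU : y ∈ U := hW₁U hy.1
    have hbij := hubij y hy.2
    have hbij' : Function.Bijective
        ((fderiv ℝ u y : (Fin (q + r) → ℝ) →ₗ[ℝ] (Fin (q + r) → ℝ))) := hbij
    set Aeq := LinearEquiv.ofBijective _ hbij' with hAeq
    set Ace := Aeq.toContinuousLinearEquiv with hAce0
    have hAce : (Ace : (Fin (q + r) → ℝ) →L[ℝ] (Fin (q + r) → ℝ)) = fderiv ℝ u y := by
      ext v
      simp [hAce0, hAeq]
    have hinv : ContinuousLinearMap.inverse (fderiv ℝ u y)
        = (Ace.symm : (Fin (q + r) → ℝ) →L[ℝ] (Fin (q + r) → ℝ)) := by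
      rw [← hAce, ContinuousLinearMap.inverse_equiv]
    have hAB : ∀ v, fderiv ℝ u y
        ((Ace.symm : (Fin (q + r) → ℝ) →L[ℝ] (Fin (q + r) → ℝ)) v) = v := by
      intro v
      have := Ace.apply_symm_apply v
      rwa [← hAce]
    have hBA : ∀ v, (Ace.symm : (Fin (q + r) → ℝ) →L[ℝ] (Fin (q + r) → ℝ))
        (fderiv ℝ u y v) = v := by
      intro v
      have h1 : fderiv ℝ u y v = Ace v := by rw [← hAce]; rfl
      rw [h1]
      exact Ace.symm_apply_apply v
    have hBA' : ∀ v, Ace.symm (fderiv ℝ u y v) = v := fun v => hBA v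
    have hω : ∀ v, ωn y v = h y * D (fun i => fderiv ℝ u y (v i)) := by
      intro v
      have ht := top_form_eq (ωn y) (haltω y hyU) Aeq v
      have h1 : (fun k => Aeq.symm (Pi.single k 1))
          = fun k => ContinuousLinearMap.inverse (fderiv ℝ u y) (Pi.single k 1) := by
        funext k
        rw [hinv]
        rfl
      have h2 : (fun i => Aeq (v i)) = fun i => fderiv ℝ u y (v i) := by
        funext i
        rfl
      rw [ht, h1, h2]
    have hstep : ∀ s : Fin q → Fin (q + r),
        V y (fun i => ContinuousLinearMap.proj (s i)) *
          ωn y (Fin.append (fun i : Fin q => Pi.single (s i.rev) (1 : ℝ)) z)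
        = (g y * h y) *
            (c (fun i => (ContinuousLinearMap.proj (s i)).comp
                (Ace.symm : (Fin (q + r) → ℝ) →L[ℝ] (Fin (q + r) → ℝ))) *
              D (Fin.append (fun i => fderiv ℝ u y (Pi.single (s i.rev) 1))
                  (fun i => fderiv ℝ u y (z i)))) := by
      intro s
      have hV1 : V y (fun i => ContinuousLinearMap.proj (s i))
          = g y * V' y (fun i => ContinuousLinearMap.proj (s i)) := by
        rw [hVg y hy.1]
        rfl
      have hV2 : V' y (fun i => ContinuousLinearMap.proj (s i))
          = c (fun i => (ContinuousLinearMap.proj (s i)).comp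
              (Ace.symm : (Fin (q + r) → ℝ) →L[ℝ] (Fin (q + r) → ℝ))) := by
        rw [hc y hy.2]
        congr 1
        funext i
        ext v
        simp only [ContinuousLinearMap.coe_comp', Function.comp_apply,
          ContinuousLinearMap.proj_apply, ContinuousLinearEquiv.coe_coe]
        rw [hBA' v]
      have hω1 : ωn y (Fin.append (fun i : Fin q => Pi.single (s i.rev) (1 : ℝ)) z)
          = h y * D (Fin.append (fun i => fderiv ℝ u y (Pi.single (s i.rev) 1))
              (fun i => fderiv ℝ u y (z i))) := by
        rw [hω, comp_append]
      rw [hV1, hV2, hω1]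
      ring
    have hsum : ∑ s : Fin q → Fin (q + r), V y (fun i => ContinuousLinearMap.proj (s i)) *
        ωn y (Fin.append (fun i : Fin q => Pi.single (s i.rev) (1 : ℝ)) z)
        = (g y * h y) * ∑ s : Fin q → Fin (q + r),
            c (fun i => (ContinuousLinearMap.proj (s i)).comp
                (Ace.symm : (Fin (q + r) → ℝ) →L[ℝ] (Fin (q + r) → ℝ))) *
              D (Fin.append (fun i => fderiv ℝ u y (Pi.single (s i.rev) 1))
                (fun i => fderiv ℝ u y (z i))) := by
      rw [Finset.mul_sum]
      exact Finset.sum_congr rfl fun s _ => hstep s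
    rw [hιVω, hsum,
      dual_pair_sum c D (fderiv ℝ u y) _ hAB (fun i => fderiv ℝ u y (z i))]
    have hce := hc'app (fun i => fderiv ℝ u y (z i))
    rw [ContinuousMultilinearMap.compContinuousLinearMap_apply, hce, one_div]
    ring
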